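/- Suppose the generalized Golub–Kahan recurrences hold with μ = 0 and all coefficients nonzero: γ₁u₁ = b, α₁v₁ = AᵀR⁻¹u₁, and for j < k: γ_{j+1}u_{j+1} = AQv_j − α_j u_j, α_{j+1}v_{j+1} = AᵀR⁻¹u_{j+1} − γ_{j+1}v_j, with α_j ≠ 0 and γ_j ≠ 0 for all j ≤ k. Then span{v₁,…,v_k} = span{w, Mw, …, M^{k−1}w} with M = AᵀR⁻¹AQ and w = AᵀR⁻¹b, and span{u₁,…,u_k} = span{b, Nb, …, N^{k−1}b} with N = AQAᵀR⁻¹; i.e., the genGK vectors span the generalized Krylov subspaces 𝒦_k(AᵀR⁻¹AQ, AᵀR⁻¹b) and 𝒦_k(AQAᵀR⁻¹, b). -/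
import Mathlib


open Matrix

/-- with μ = 0 and all genGK coefficients nonzero, the genGK vectors
span the generalized Krylov subspaces:
span{v₁,…,v_k} = 𝒦_k(AᵀR⁻¹AQ, AᵀR⁻¹b) and span{u₁,…,u_k} = 𝒦_k(AQAᵀR⁻¹, b).
(Sequences are 1-based: `u j` is u_j for 1 ≤ j ≤ k.) -/
theorem genGK_krylov_spans
    {m n k : ℕ} (hk : 1 ≤ k)
    (A : Matrix (Fin m) (Fin n) ℝ) (R : Matrix (Fin m) (Fin m) ℝ)
    (Q : Matrix (Fin n) (Fin n) ℝ) (hR : R.PosDef) (hQ : Q.PosDef)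
    (b : Fin m → ℝ)
    (u : ℕ → (Fin m → ℝ)) (v : ℕ → (Fin n → ℝ)) (a c : ℕ → ℝ)
    (hinit_u : c 1 • u 1 = b)
    (hinit_v : a 1 • v 1 = Aᵀ *ᵥ (R⁻¹ *ᵥ u 1))
    (hrec_u : ∀ j, 1 ≤ j → j < k →
      c (j + 1) • u (j + 1) = A *ᵥ (Q *ᵥ v j) - a j • u j)
    (hrec_v : ∀ j, 1 ≤ j → j < k →
      a (j + 1) • v (j + 1) = Aᵀ *ᵥ (R⁻¹ *ᵥ u (j + 1)) - c (j + 1) • v j)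
    (ha : ∀ j, 1 ≤ j → j ≤ k → a j ≠ 0)
    (hc : ∀ j, 1 ≤ j → j ≤ k → c j ≠ 0) :
    Submodule.span ℝ (Set.range fun j : Fin k => v ((j : ℕ) + 1))
      = Submodule.span ℝ (Set.range fun i : Fin k =>
          ((Aᵀ * R⁻¹ * A * Q) ^ (i : ℕ)) *ᵥ (Aᵀ *ᵥ (R⁻¹ *ᵥ b))) ∧
    Submodule.span ℝ (Set.range fun j : Fin k => u ((j : ℕ) + 1))
      = Submodule.span ℝ (Set.range fun i : Fin k =>
          ((A * Q * Aᵀ * R⁻¹) ^ (i : ℕ)) *ᵥ b) := by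
  classical
  set M := Aᵀ * R⁻¹ * A * Q with hM
  set N := A * Q * Aᵀ * R⁻¹ with hN
  set w := Aᵀ *ᵥ (R⁻¹ *ᵥ b) with hw
  -- ℕ-indexed prefix spans
  set Kv : ℕ → Submodule ℝ (Fin n → ℝ) := fun j =>
    Submodule.span ℝ {x | ∃ i, i < j ∧ x = (M ^ i) *ᵥ w} with hKv
  set Vv : ℕ → Submodule ℝ (Fin n → ℝ) := fun j =>
    Submodule.span ℝ {x | ∃ i, 1 ≤ i ∧ i ≤ j ∧ x = v i} with hVv
  set Ku : ℕ → Submodule ℝ (Fin m → ℝ) := fun j =>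
    Submodule.span ℝ {x | ∃ i, i < j ∧ x = (N ^ i) *ᵥ b} with hKu
  set Uu : ℕ → Submodule ℝ (Fin m → ℝ) := fun j =>
    Submodule.span ℝ {x | ∃ i, 1 ≤ i ∧ i ≤ j ∧ x = u i} with hUu
  -- monotonicity
  have hKvmono : ∀ {i j : ℕ}, i ≤ j → Kv i ≤ Kv j := by
    intro i j hij
    exact Submodule.span_mono (by rintro x ⟨p, hp, rfl⟩; exact ⟨p, by omega, rfl⟩)
  have hVvmono : ∀ {i j : ℕ}, i ≤ j → Vv i ≤ Vv j := by
    intro i j hij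
    exact Submodule.span_mono (by rintro x ⟨p, h1, h2, rfl⟩; exact ⟨p, h1, by omega, rfl⟩)
  have hKumono : ∀ {i j : ℕ}, i ≤ j → Ku i ≤ Ku j := by
    intro i j hij
    exact Submodule.span_mono (by rintro x ⟨p, hp, rfl⟩; exact ⟨p, by omega, rfl⟩)
  have hUumono : ∀ {i j : ℕ}, i ≤ j → Uu i ≤ Uu j := by
    intro i j hij
    exact Submodule.span_mono (by rintro x ⟨p, h1, h2, rfl⟩; exact ⟨p, h1, by omega, rfl⟩)
  -- generator memberships
  have hvmem : ∀ i j : ℕ, 1 ≤ i → i ≤ j → v i ∈ Vv j := fun i j h1 h2 =>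
    Submodule.subset_span ⟨i, h1, h2, rfl⟩
  have humem : ∀ i j : ℕ, 1 ≤ i → i ≤ j → u i ∈ Uu j := fun i j h1 h2 =>
    Submodule.subset_span ⟨i, h1, h2, rfl⟩
  have hKvmem : ∀ i j : ℕ, i < j → (M ^ i) *ᵥ w ∈ Kv j := fun i j h =>
    Submodule.subset_span ⟨i, h, rfl⟩
  have hKumem : ∀ i j : ℕ, i < j → (N ^ i) *ᵥ b ∈ Ku j := fun i j h =>
    Submodule.subset_span ⟨i, h, rfl⟩
  -- applying M (resp. N) maps Kv j (resp. Ku j) into the next Krylov space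
  have hMmap : ∀ j (x : Fin n → ℝ), x ∈ Kv j → M *ᵥ x ∈ Kv (j + 1) := by
    intro j x hx
    have h2 : Submodule.map M.mulVecLin (Kv j) ≤ Kv (j + 1) := by
      rw [hKv]
      rw [Submodule.map_span, Submodule.span_le]
      rintro _ ⟨y, ⟨i, hi, rfl⟩, rfl⟩
      exact Submodule.subset_span ⟨i + 1, by omega, by
        rw [mulVecLin_apply, mulVec_mulVec, ← pow_succ']⟩
    exact h2 (Submodule.mem_map_of_mem hx)
  have hNmap : ∀ j (x : Fin m → ℝ), x ∈ Ku j → N *ᵥ x ∈ Ku (j + 1) := by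
    intro j x hx
    have h2 : Submodule.map N.mulVecLin (Ku j) ≤ Ku (j + 1) := by
      rw [hKu]
      rw [Submodule.map_span, Submodule.span_le]
      rintro _ ⟨y, ⟨i, hi, rfl⟩, rfl⟩
      exact Submodule.subset_span ⟨i + 1, by omega, by
        rw [mulVecLin_apply, mulVec_mulVec, ← pow_succ']⟩
    exact h2 (Submodule.mem_map_of_mem hx)
  -- solved recurrences
  have hAQ : ∀ j, 1 ≤ j → j < k →
      A *ᵥ (Q *ᵥ v j) = c (j + 1) • u (j + 1) + a j • u j := by
    intro j h1 h2
    exact eq_add_of_sub_eq (hrec_u j h1 h2).symm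
  have hATRs : ∀ j, 1 ≤ j → j < k →
      Aᵀ *ᵥ (R⁻¹ *ᵥ u (j + 1)) = a (j + 1) • v (j + 1) + c (j + 1) • v j := by
    intro j h1 h2
    exact eq_add_of_sub_eq (hrec_v j h1 h2).symm
  -- G1 : AᵀR⁻¹ u_j lies in the span of v's
  have G1 : ∀ j, 1 ≤ j → j ≤ k → Aᵀ *ᵥ (R⁻¹ *ᵥ u j) ∈ Vv j := by
    intro j h1 h2
    match j, h1 with
    | 1, _ =>
      rw [← hinit_v]
      exact Submodule.smul_mem _ _ (hvmem 1 1 le_rfl le_rfl)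
    | (j + 2), _ =>
      rw [hATRs (j + 1) (by omega) (by omega)]
      exact add_mem (Submodule.smul_mem _ _ (hvmem (j + 2) (j + 2) (by omega) le_rfl))
        (Submodule.smul_mem _ _ (hvmem (j + 1) (j + 2) (by omega) (by omega)))
  -- G2 : M v_j ∈ span{v_1,…,v_{j+1}}
  have G2 : ∀ j, 1 ≤ j → j < k → M *ᵥ v j ∈ Vv (j + 1) := by
    intro j h1 h2
    have e0 : M *ᵥ v j = Aᵀ *ᵥ (R⁻¹ *ᵥ (A *ᵥ (Q *ᵥ v j))) := by
      rw [hM]; simp [mulVec_mulVec, Matrix.mul_assoc]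
    rw [e0, hAQ j h1 h2]
    simp only [mulVec_add, mulVec_smul]
    exact add_mem (Submodule.smul_mem _ _ (G1 (j + 1) (by omega) (by omega)))
      (Submodule.smul_mem _ _ (hVvmono (by omega) (G1 j h1 (by omega))))
  -- extend G2 to the whole span
  have hMV : ∀ j, j < k → ∀ x ∈ Vv j, M *ᵥ x ∈ Vv (j + 1) := by
    intro j hj x hx
    have h2 : Submodule.map M.mulVecLin (Vv j) ≤ Vv (j + 1) := by
      rw [hVv]
      rw [Submodule.map_span, Submodule.span_le]
      rintro _ ⟨y, ⟨i, hi1, hi2, rfl⟩, rfl⟩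
      rw [mulVecLin_apply]
      exact hVvmono (by omega) (G2 i hi1 (by omega))
    exact h2 (Submodule.mem_map_of_mem hx)
  -- H1 : AQ v_j ∈ span{u_1,…,u_{j+1}}
  have H1 : ∀ j, 1 ≤ j → j < k → A *ᵥ (Q *ᵥ v j) ∈ Uu (j + 1) := by
    intro j h1 h2
    rw [hAQ j h1 h2]
    exact add_mem (Submodule.smul_mem _ _ (humem (j + 1) (j + 1) (by omega) le_rfl))
      (Submodule.smul_mem _ _ (humem j (j + 1) h1 (by omega)))
  -- H2 : N u_j ∈ span{u_1,…,u_{j+1}}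
  have H2 : ∀ j, 1 ≤ j → j < k → N *ᵥ u j ∈ Uu (j + 1) := by
    intro j h1 h2
    have e0 : N *ᵥ u j = A *ᵥ (Q *ᵥ (Aᵀ *ᵥ (R⁻¹ *ᵥ u j))) := by
      rw [hN]; simp [mulVec_mulVec, Matrix.mul_assoc]
    match j, h1 with
    | 1, _ =>
      rw [e0, ← hinit_v]
      simp only [mulVec_smul]
      exact Submodule.smul_mem _ _ (H1 1 le_rfl h2)
    | (j + 2), _ =>
      rw [e0, hATRs (j + 1) (by omega) (by omega)]
      simp only [mulVec_add, mulVec_smul]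
      exact add_mem (Submodule.smul_mem _ _ (H1 (j + 2) (by omega) h2))
        (Submodule.smul_mem _ _ (hUumono (by omega) (H1 (j + 1) (by omega) (by omega))))
  have hNU : ∀ j, j < k → ∀ x ∈ Uu j, N *ᵥ x ∈ Uu (j + 1) := by
    intro j hj x hx
    have h2 : Submodule.map N.mulVecLin (Uu j) ≤ Uu (j + 1) := by
      rw [hUu]
      rw [Submodule.map_span, Submodule.span_le]
      rintro _ ⟨y, ⟨i, hi1, hi2, rfl⟩, rfl⟩
      rw [mulVecLin_apply]
      exact hUumono (by omega) (H2 i hi1 (by omega))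
    exact h2 (Submodule.mem_map_of_mem hx)
  -- G4 : Krylov vectors (v side) lie in the span of the v's
  have G4 : ∀ i, i < k → (M ^ i) *ᵥ w ∈ Vv (i + 1) := by
    intro i
    induction i with
    | zero =>
      intro _
      have hw1 : w = (c 1 * a 1) • v 1 := by
        rw [hw, ← hinit_u, mulVec_smul, mulVec_smul, ← hinit_v, smul_smul]
      rw [pow_zero, one_mulVec, hw1]
      exact Submodule.smul_mem _ _ (hvmem 1 1 le_rfl le_rfl)
    | succ i ih =>
      intro h
      have e : (M ^ (i + 1)) *ᵥ w = M *ᵥ ((M ^ i) *ᵥ w) := by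
        rw [pow_succ']; exact (mulVec_mulVec _ _ _).symm
      rw [e]
      exact hMV (i + 1) h _ (ih (by omega))
  -- H4 : Krylov vectors (u side) lie in the span of the u's
  have H4 : ∀ i, i < k → (N ^ i) *ᵥ b ∈ Uu (i + 1) := by
    intro i
    induction i with
    | zero =>
      intro _
      rw [pow_zero, one_mulVec, ← hinit_u]
      exact Submodule.smul_mem _ _ (humem 1 1 le_rfl le_rfl)
    | succ i ih =>
      intro h
      have e : (N ^ (i + 1)) *ᵥ b = N *ᵥ ((N ^ i) *ᵥ b) := by
        rw [pow_succ']; exact (mulVec_mulVec _ _ _).symm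
      rw [e]
      exact hNU (i + 1) h _ (ih (by omega))
  -- Forward direction, v side
  have Fv : ∀ j, 1 ≤ j → j ≤ k → v j ∈ Kv j ∧ Aᵀ *ᵥ (R⁻¹ *ᵥ u j) ∈ Kv j := by
    intro j
    induction j with
    | zero => omega
    | succ j ih =>
      intro _ hjk
      rcases Nat.eq_zero_or_pos j with rfl | hj
      · -- base case j = 1
        have hu1 : c 1 • (Aᵀ *ᵥ (R⁻¹ *ᵥ u 1)) = w := by
          rw [← mulVec_smul, ← mulVec_smul, hinit_u]
        have hwmem : w ∈ Kv 1 := by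
          have := hKvmem 0 1 (by omega)
          rwa [pow_zero, one_mulVec] at this
        have hATR1 : Aᵀ *ᵥ (R⁻¹ *ᵥ u 1) ∈ Kv 1 :=
          ((Kv 1).smul_mem_iff (hc 1 le_rfl hk)).1 (hu1 ▸ hwmem)
        refine ⟨?_, hATR1⟩
        have : a 1 • v 1 ∈ Kv 1 := hinit_v ▸ hATR1
        exact ((Kv 1).smul_mem_iff (ha 1 le_rfl hk)).1 this
      · -- step
        obtain ⟨hv, hu⟩ := ih hj (by omega)
        have hATR : Aᵀ *ᵥ (R⁻¹ *ᵥ u (j + 1)) ∈ Kv (j + 1) := by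
          have e : c (j + 1) • (Aᵀ *ᵥ (R⁻¹ *ᵥ u (j + 1)))
              = M *ᵥ v j - a j • (Aᵀ *ᵥ (R⁻¹ *ᵥ u j)) := by
            rw [← mulVec_smul, ← mulVec_smul, hrec_u j hj (by omega)]
            rw [hM]
            simp [mulVec_sub, mulVec_smul, mulVec_mulVec, Matrix.mul_assoc]
          have hmem : M *ᵥ v j - a j • (Aᵀ *ᵥ (R⁻¹ *ᵥ u j)) ∈ Kv (j + 1) :=
            sub_mem (hMmap j _ hv) (Submodule.smul_mem _ _ (hKvmono (by omega) hu))
          exact ((Kv (j + 1)).smul_mem_iff (hc (j + 1) (by omega) hjk)).1 (e ▸ hmem)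
        refine ⟨?_, hATR⟩
        have e2 : a (j + 1) • v (j + 1) ∈ Kv (j + 1) := by
          rw [hrec_v j hj (by omega)]
          exact sub_mem hATR (Submodule.smul_mem _ _ (hKvmono (by omega) hv))
        exact ((Kv (j + 1)).smul_mem_iff (ha (j + 1) (by omega) hjk)).1 e2
  -- Forward direction, u side
  have Fu : ∀ j, 1 ≤ j → j ≤ k →
      u j ∈ Ku j ∧ (j < k → A *ᵥ (Q *ᵥ v j) ∈ Ku (j + 1)) := by
    intro j
    induction j with
    | zero => omega
    | succ j ih =>
      intro _ hjk
      rcases Nat.eq_zero_or_pos j with rfl | hj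
      · -- base case j = 1
        have hbmem : b ∈ Ku 1 := by
          have := hKumem 0 1 (by omega)
          rwa [pow_zero, one_mulVec] at this
        have hu1 : u 1 ∈ Ku 1 :=
          ((Ku 1).smul_mem_iff (hc 1 le_rfl hk)).1 (hinit_u ▸ hbmem)
        refine ⟨hu1, ?_⟩
        intro h1k
        have e : a 1 • (A *ᵥ (Q *ᵥ v 1)) = N *ᵥ u 1 := by
          rw [← mulVec_smul, ← mulVec_smul, hinit_v, hN]
          simp [mulVec_mulVec, Matrix.mul_assoc]
        have hmem : N *ᵥ u 1 ∈ Ku 2 := hNmap 1 _ (hKumono (by omega) hu1)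
        exact ((Ku 2).smul_mem_iff (ha 1 le_rfl hk)).1 (e ▸ hmem)
      · -- step
        obtain ⟨huj, hAQj⟩ := ih hj (by omega)
        have hAQj' := hAQj (by omega)
        have hujmem : u (j + 1) ∈ Ku (j + 1) := by
          have e : c (j + 1) • u (j + 1) ∈ Ku (j + 1) := by
            rw [hrec_u j hj (by omega)]
            exact sub_mem hAQj' (Submodule.smul_mem _ _ (hKumono (by omega) huj))
          exact ((Ku (j + 1)).smul_mem_iff (hc (j + 1) (by omega) hjk)).1 e
        refine ⟨hujmem, ?_⟩
        intro hj1k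
        have e : a (j + 1) • (A *ᵥ (Q *ᵥ v (j + 1)))
            = N *ᵥ u (j + 1) - c (j + 1) • (A *ᵥ (Q *ᵥ v j)) := by
          rw [← mulVec_smul, ← mulVec_smul, hrec_v j hj (by omega), hN]
          simp [mulVec_sub, mulVec_smul, mulVec_mulVec, Matrix.mul_assoc]
        have hmem : N *ᵥ u (j + 1) - c (j + 1) • (A *ᵥ (Q *ᵥ v j)) ∈ Ku (j + 2) :=
          sub_mem (hNmap (j + 1) _ hujmem)
            (Submodule.smul_mem _ _ (hKumono (by omega) hAQj'))
        exact ((Ku (j + 2)).smul_mem_iff (ha (j + 1) (by omega) hjk)).1 (e ▸ hmem)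
  -- convert the range sets to the ℕ-indexed descriptions
  have hsv : (Set.range fun j : Fin k => v ((j : ℕ) + 1))
      = {x | ∃ i, 1 ≤ i ∧ i ≤ k ∧ x = v i} := by
    ext x
    constructor
    · rintro ⟨j, rfl⟩; exact ⟨(j : ℕ) + 1, by omega, by have := j.isLt; omega, rfl⟩
    · rintro ⟨i, h1, h2, rfl⟩
      refine ⟨⟨i - 1, by omega⟩, ?_⟩
      have hi : i - 1 + 1 = i := by omega
      show v ((i - 1) + 1) = v i
      rw [hi]
  have hsu : (Set.range fun j : Fin k => u ((j : ℕ) + 1))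
      = {x | ∃ i, 1 ≤ i ∧ i ≤ k ∧ x = u i} := by
    ext x
    constructor
    · rintro ⟨j, rfl⟩; exact ⟨(j : ℕ) + 1, by omega, by have := j.isLt; omega, rfl⟩
    · rintro ⟨i, h1, h2, rfl⟩
      refine ⟨⟨i - 1, by omega⟩, ?_⟩
      have hi : i - 1 + 1 = i := by omega
      show u ((i - 1) + 1) = u i
      rw [hi]
  have hskv : (Set.range fun i : Fin k => (M ^ (i : ℕ)) *ᵥ w)
      = {x | ∃ i, i < k ∧ x = (M ^ i) *ᵥ w} := by
    ext x
    constructor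
    · rintro ⟨i, rfl⟩; exact ⟨(i : ℕ), i.isLt, rfl⟩
    · rintro ⟨i, hi, rfl⟩; exact ⟨⟨i, hi⟩, rfl⟩
  have hsku : (Set.range fun i : Fin k => (N ^ (i : ℕ)) *ᵥ b)
      = {x | ∃ i, i < k ∧ x = (N ^ i) *ᵥ b} := by
    ext x
    constructor
    · rintro ⟨i, rfl⟩; exact ⟨(i : ℕ), i.isLt, rfl⟩
    · rintro ⟨i, hi, rfl⟩; exact ⟨⟨i, hi⟩, rfl⟩
  constructor
  · rw [hsv, hskv]
    show Vv k = Kv k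
    apply le_antisymm
    · rw [hVv, Submodule.span_le]
      rintro x ⟨i, h1, h2, rfl⟩
      exact hKvmono h2 (Fv i h1 h2).1
    · rw [hKv, Submodule.span_le]
      rintro x ⟨i, hi, rfl⟩
      exact hVvmono (by omega) (G4 i hi)
  · rw [hsu, hsku]
    show Uu k = Ku k
    apply le_antisymm
    · rw [hUu, Submodule.span_le]
      rintro x ⟨i, h1, h2, rfl⟩
      exact hKumono h2 (Fu i h1 h2).1
    · rw [hKu, Submodule.span_le]
      rintro x ⟨i, hi, rfl⟩
      exact hUumono (by omega) (H4 i hi)
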